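/- arXiv:2102.07956 — 2 statements merged into one kernel-verified Lean document; each statement's English description precedes it below -/
import Mathlib

section
/- Let F be the (m-1)×(m-1) real matrix with entries F_{ij} = δ_{ij} w_i − ∫_X w_i w_j E_i(x) E_j(x) dμ(x), where w_i > 0, E_i : X → (0,∞) are measurable, and the normalization conditions ∑_{j=1}^m w_j E_j(x) = 1 for μ-a.e. x and ∫_X w_i E_i(x) dμ(x) = w_i hold for all i ≤ m (with m ≥ 2). Then F is symmetric and strictly diagonally dominant, hence invertible. -/
open MeasureTheory

/-- The matrix `F` with `F_{ij} = δ_{ij} w_i − ∫ w_i w_j E_i E_j dμ`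
(indices ranging over the first m of m+1 values, m+1 ≥ 2) is symmetric and
strictly diagonally dominant, hence invertible. -/
theorem stmt4 {X : Type*} [MeasurableSpace X]
    (μ : Measure X) [IsProbabilityMeasure μ]
    (m : ℕ) (hm : 1 ≤ m)
    (w : Fin (m + 1) → ℝ) (hw : ∀ i, 0 < w i)
    (E : Fin (m + 1) → X → ℝ) (hE : ∀ i, Measurable (E i))
    (hEpos : ∀ i x, 0 < E i x)
    (hnorm : ∀ᵐ x ∂μ, ∑ j, w j * E j x = 1)
    (hint : ∀ i, ∫ x, E i x ∂μ = 1)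
    (F : Matrix (Fin m) (Fin m) ℝ)
    (hF : ∀ i j, F i j = (if i = j then w i.castSucc else 0)
        - ∫ x, w i.castSucc * w j.castSucc * E i.castSucc x * E j.castSucc x ∂μ) :
    F.IsSymm ∧ (∀ i, ∑ j ∈ Finset.univ.erase i, |F i j| < |F i i|) ∧ IsUnit F := by
  -- abbreviations
  set g : Fin (m + 1) → X → ℝ := fun j x => w j * E j x with hg
  have hgpos : ∀ j x, 0 < g j x := fun j x => mul_pos (hw j) (hEpos j x)
  have hgmeas : ∀ j, Measurable (g j) := fun j => (hE j).const_mul _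
  -- each g j is a.e. bounded by 1
  have hle1 : ∀ j, ∀ᵐ x ∂μ, g j x ≤ 1 := by
    intro j
    filter_upwards [hnorm] with x hx
    calc g j x ≤ ∑ k, g k x :=
          Finset.single_le_sum (fun k _ => (hgpos k x).le) (Finset.mem_univ j)
      _ = 1 := hx
  -- integrability of products
  have hInt : ∀ i j, Integrable (fun x => g i x * g j x) μ := by
    intro i j
    refine Integrable.mono' (integrable_const 1) ((hgmeas i).mul (hgmeas j)).aestronglyMeasurable ?_
    filter_upwards [hle1 i, hle1 j] with x hi hj
    rw [Real.norm_eq_abs, abs_of_pos (mul_pos (hgpos i x) (hgpos j x))]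
    calc g i x * g j x ≤ 1 * 1 :=
          mul_le_mul hi hj (hgpos j x).le zero_le_one
      _ = 1 := by norm_num
  have hgInt : ∀ i, Integrable (g i) μ := by
    intro i
    refine Integrable.mono' (integrable_const 1) (hgmeas i).aestronglyMeasurable ?_
    filter_upwards [hle1 i] with x hi
    rw [Real.norm_eq_abs, abs_of_pos (hgpos i x)]
    exact hi
  -- the key integrals
  set I : Fin (m + 1) → Fin (m + 1) → ℝ := fun i j => ∫ x, g i x * g j x ∂μ with hI
  have hIF : ∀ i j : Fin m, F i j = (if i = j then w i.castSucc else 0) - I i.castSucc j.castSucc := by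
    intro i j
    rw [hF i j]
    congr 1
    apply integral_congr_ae
    filter_upwards with x
    simp only [hg]
    ring
  have hIsymm : ∀ i j, I i j = I j i := by
    intro i j
    apply integral_congr_ae
    filter_upwards with x
    ring
  have hIpos : ∀ i j, 0 < I i j := by
    intro i j
    rw [hI]
    rw [integral_pos_iff_support_of_nonneg (fun x => (mul_pos (hgpos i x) (hgpos j x)).le) (hInt i j)]
    have : Function.support (fun x => g i x * g j x) = Set.univ := by
      ext x
      simp only [Function.mem_support, Set.mem_univ, iff_true]
      exact (mul_pos (hgpos i x) (hgpos j x)).ne'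
    rw [this]
    simp
  -- ∫ g i = w i
  have hgint : ∀ i, ∫ x, g i x ∂μ = w i := by
    intro i
    simp only [hg]
    rw [integral_const_mul, hint i, mul_one]
  -- row sums of I
  have hrow : ∀ i, ∑ j, I i j = w i := by
    intro i
    rw [hI]
    rw [← integral_finset_sum _ (fun j _ => hInt i j)]
    rw [← hgint i]
    apply integral_congr_ae
    filter_upwards [hnorm] with x hx
    rw [← Finset.mul_sum]
    have : ∑ k, g k x = 1 := hx
    rw [this, mul_one]
  have key : ∀ i : Fin m, ∑ j ∈ Finset.univ.erase i, I i.castSucc j.castSucc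
      = w i.castSucc - I i.castSucc (Fin.last m) - I i.castSucc i.castSucc := by
    intro i
    have h1 : ∑ j : Fin m, I i.castSucc j.castSucc
        = w i.castSucc - I i.castSucc (Fin.last m) := by
      have := hrow i.castSucc
      rw [Fin.sum_univ_castSucc] at this
      linarith
    rw [Finset.sum_erase_eq_sub (Finset.mem_univ i), h1]
  -- diagonal entries
  have hdiag : ∀ i : Fin m, F i i
      = (∑ j ∈ Finset.univ.erase i, I i.castSucc j.castSucc) + I i.castSucc (Fin.last m) := by
    intro i
    rw [hIF i i, if_pos rfl, key i]
    ring
  have hoffsum : ∀ i : Fin m, ∑ j ∈ Finset.univ.erase i, |F i j|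
      = ∑ j ∈ Finset.univ.erase i, I i.castSucc j.castSucc := by
    intro i
    apply Finset.sum_congr rfl
    intro j hj
    have hji : j ≠ i := Finset.ne_of_mem_erase hj
    rw [hIF i j, if_neg (fun h => hji h.symm), zero_sub, abs_neg,
      abs_of_pos (hIpos _ _)]
  have hdom : ∀ i : Fin m, ∑ j ∈ Finset.univ.erase i, |F i j| < |F i i| := by
    intro i
    have hS : 0 ≤ ∑ j ∈ Finset.univ.erase i, I i.castSucc j.castSucc :=
      Finset.sum_nonneg fun j _ => (hIpos _ _).le
    have hFpos : 0 < F i i := by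
      rw [hdiag i]
      have hS : 0 ≤ ∑ j ∈ Finset.univ.erase i, I i.castSucc j.castSucc :=
        Finset.sum_nonneg fun j _ => (hIpos _ _).le
      have := hIpos i.castSucc (Fin.last m)
      linarith
    rw [hoffsum i, abs_of_pos hFpos, hdiag i]
    have := hIpos i.castSucc (Fin.last m)
    linarith
  refine ⟨?_, hdom, ?_⟩
  · ext i j
    rw [Matrix.transpose_apply, hIF i j, hIF j i, hIsymm]
    congr 1
    by_cases h : i = j
    · simp [h]
    · rw [if_neg h, if_neg (fun hh => h hh.symm)]
  · rw [Matrix.isUnit_iff_isUnit_det, isUnit_iff_ne_zero]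
    apply det_ne_zero_of_sum_row_lt_diag
    intro k
    simpa [Real.norm_eq_abs] using hdom k
end

section
/- Fréchet differentiability of the entropic dual in α: the functional L(α) = ∫_X α dμ − ζ ∫_X ∑_{i=1}^m w_i e^{(α(x)+β_i−g(x,y_i))/ζ} dμ(x) on L^∞(X,μ) is Fréchet differentiable at every α, with derivative the bounded linear functional h ↦ ∫_X (1 − ∑_{i=1}^m w_i E_i(x)) h(x) dμ(x), where E_i(x) = e^{(α(x)+β_i−g(x,y_i))/ζ}. -/
set_option maxHeartbeats 1000000
open MeasureTheory Real

lemma stmt8_ae_le {X : Type*} [MeasurableSpace X] {μ : Measure X}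
    (u : Lp ℝ ⊤ μ) : ∀ᵐ x ∂μ, |u x| ≤ ‖u‖ := by
  have h1 : ∀ᵐ x ∂μ, (‖u x‖₊ : ENNReal) ≤ eLpNormEssSup u μ := ae_le_eLpNormEssSup
  have h2 : eLpNormEssSup (u : X → ℝ) μ ≠ ⊤ := by
    rw [← eLpNorm_exponent_top]; exact (Lp.eLpNorm_lt_top u).ne
  filter_upwards [h1] with x hx
  have := ENNReal.toReal_mono h2 hx
  simpa [Lp.norm_def, eLpNorm_exponent_top, Real.norm_eq_abs] using this

lemma stmt8_delta_bound {m : ℕ} (w β G : Fin m → ℝ) (hw : ∀ i, 0 ≤ w i)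
    (hw1 : ∑ i, w i = 1) {ζ : ℝ} (hζ : 0 < ζ) (a t C δ : ℝ)
    (hfC : ∀ i, Real.exp ((a + β i - G i) / ζ) ≤ C)
    (ht : |t| ≤ ζ) (hδ : |t| ≤ δ) :
    |∑ i, w i * Real.exp ((a + t + β i - G i) / ζ)
      - ∑ i, w i * Real.exp ((a + β i - G i) / ζ)
      - (∑ i, w i * Real.exp ((a + β i - G i) / ζ)) * t / ζ|
      ≤ C / ζ ^ 2 * δ ^ 2 := by
  set s := t / ζ with hs
  have hs1 : |s| ≤ 1 := by
    rw [hs, abs_div, abs_of_pos hζ]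
    exact (div_le_one hζ).2 ht
  have key : ∀ i, Real.exp ((a + t + β i - G i) / ζ)
      = Real.exp ((a + β i - G i) / ζ) * Real.exp s := by
    intro i
    rw [← Real.exp_add]
    rw [← add_div]
    congr 1
    ring
  have expand : ∑ i, w i * Real.exp ((a + t + β i - G i) / ζ)
      - ∑ i, w i * Real.exp ((a + β i - G i) / ζ)
      - (∑ i, w i * Real.exp ((a + β i - G i) / ζ)) * t / ζ
      = ∑ i, w i * Real.exp ((a + β i - G i) / ζ) * (Real.exp s - 1 - s) := by
    simp only [key]
    rw [mul_div_assoc, ← hs, Finset.sum_mul, ← Finset.sum_sub_distrib, ← Finset.sum_sub_distrib]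
    exact Finset.sum_congr rfl fun i _ => by ring
  rw [expand]
  have habs : ∀ i ∈ Finset.univ, |w i * Real.exp ((a + β i - G i) / ζ) * (Real.exp s - 1 - s)|
      ≤ w i * (C / ζ ^ 2 * δ ^ 2) := by
    intro i _
    rw [abs_mul, abs_mul, abs_of_nonneg (hw i), abs_of_pos (Real.exp_pos _), mul_assoc]
    refine mul_le_mul_of_nonneg_left ?_ (hw i)
    have h1 : |Real.exp s - 1 - s| ≤ s ^ 2 := Real.abs_exp_sub_one_sub_id_le hs1
    have h2 : s ^ 2 ≤ δ ^ 2 / ζ ^ 2 := by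
      rw [hs, div_pow]
      refine div_le_div_of_nonneg_right ?_ (by positivity : (0:ℝ) ≤ ζ ^ 2)
      calc t ^ 2 = |t| ^ 2 := (sq_abs t).symm
        _ ≤ δ ^ 2 := by
            have h0 : (0:ℝ) ≤ |t| := abs_nonneg t
            nlinarith
    have hexp0 : (0:ℝ) ≤ Real.exp ((a + β i - G i) / ζ) := (Real.exp_pos _).le
    calc Real.exp ((a + β i - G i) / ζ) * |Real.exp s - 1 - s|
        ≤ C * (δ ^ 2 / ζ ^ 2) := by
          refine mul_le_mul (hfC i) (h1.trans h2) (abs_nonneg _) ?_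
          exact le_trans hexp0 (hfC i)
      _ = C / ζ ^ 2 * δ ^ 2 := by ring
  calc |∑ i, w i * Real.exp ((a + β i - G i) / ζ) * (Real.exp s - 1 - s)|
      ≤ ∑ i, |w i * Real.exp ((a + β i - G i) / ζ) * (Real.exp s - 1 - s)| :=
        Finset.abs_sum_le_sum_abs _ _
    _ ≤ ∑ i, w i * (C / ζ ^ 2 * δ ^ 2) := Finset.sum_le_sum habs
    _ = C / ζ ^ 2 * δ ^ 2 := by rw [← Finset.sum_mul, hw1, one_mul]

lemma stmt8_sum_le {m : ℕ} (w β G : Fin m → ℝ) (hw : ∀ i, 0 ≤ w i)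
    (hw1 : ∑ i, w i = 1) {ζ : ℝ} (hζ : 0 < ζ) (a M Mβ Mg : ℝ)
    (ha : |a| ≤ M) (hβ : ∀ i, |β i| ≤ Mβ) (hG : ∀ i, |G i| ≤ Mg) :
    ∑ i, w i * Real.exp ((a + β i - G i) / ζ) ≤ Real.exp ((M + Mβ + Mg) / ζ) := by
  calc ∑ i, w i * Real.exp ((a + β i - G i) / ζ)
      ≤ ∑ i, w i * Real.exp ((M + Mβ + Mg) / ζ) := by
        refine Finset.sum_le_sum fun i _ => mul_le_mul_of_nonneg_left ?_ (hw i)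
        refine Real.exp_le_exp.2 (div_le_div_of_nonneg_right ?_ hζ.le)
        have h1 := abs_le.1 ha
        have h2 := abs_le.1 (hβ i)
        have h3 := abs_le.1 (hG i)
        linarith [h1.2, h2.2, h3.1]
    _ = Real.exp ((M + Mβ + Mg) / ζ) := by rw [← Finset.sum_mul, hw1, one_mul]

/-- Fréchet differentiability of the entropic dual functional in `α ∈ L^∞(X,μ)`,
with derivative `h ↦ ∫ (1 − ∑ᵢ wᵢ Eᵢ) h dμ`. -/
theorem stmt8 {X : Type*} [MetricSpace X] [CompactSpace X]
    [MeasurableSpace X] [BorelSpace X]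
    (μ : Measure X) [IsProbabilityMeasure μ]
    (g : X × X → ℝ) (hg : Continuous g)
    (m : ℕ) (y : Fin m → X) (β : Fin m → ℝ)
    (w : Fin m → ℝ) (hw : ∀ i, 0 < w i) (hw1 : ∑ i, w i = 1)
    (ζ : ℝ) (hζ : 0 < ζ)
    (L : Lp ℝ ⊤ μ → ℝ)
    (hL : ∀ α : Lp ℝ ⊤ μ,
      L α = ∫ x, α x ∂μ
        - ζ * ∫ x, ∑ i, w i * exp ((α x + β i - g (x, y i)) / ζ) ∂μ)
    (α : Lp ℝ ⊤ μ) :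
    ∃ D : Lp ℝ ⊤ μ →L[ℝ] ℝ, HasFDerivAt L D α ∧
      ∀ h : Lp ℝ ⊤ μ,
        D h = ∫ x, (1 - ∑ i, w i * exp ((α x + β i - g (x, y i)) / ζ)) * h x ∂μ := by
  classical
  -- bound on g
  obtain ⟨Mg, hMg⟩ : ∃ Mg : ℝ, ∀ p : X × X, |g p| ≤ Mg := by
    obtain ⟨Mg, hMg⟩ :=
      (isCompact_univ : IsCompact (Set.univ : Set (X × X))).exists_bound_of_continuousOn
        hg.continuousOn
    exact ⟨Mg, fun p => by simpa [Real.norm_eq_abs] using hMg p (Set.mem_univ p)⟩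
  set Mβ : ℝ := ∑ i, |β i| with hMβdef
  have hβb : ∀ i, |β i| ≤ Mβ := fun i =>
    Finset.single_le_sum (fun j _ => abs_nonneg (β j)) (Finset.mem_univ i)
  set F : X → ℝ := fun x => ∑ i, w i * exp ((α x + β i - g (x, y i)) / ζ) with hFdef
  set C : ℝ := exp ((‖α‖ + Mβ + Mg) / ζ) with hCdef
  have hC0 : 0 < C := exp_pos _
  have hwle : ∀ i, 0 ≤ w i := fun i => (hw i).le
  -- measurability helper
  have measG : ∀ u : X → ℝ, AEStronglyMeasurable u μ →
      AEStronglyMeasurable (fun x => ∑ i, w i * exp ((u x + β i - g (x, y i)) / ζ)) μ := by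
    intro u hu
    refine Finset.aestronglyMeasurable_fun_sum _ fun i _ => ?_
    have hgc : Continuous fun x : X => g (x, y i) :=
      hg.comp (continuous_id.prodMk continuous_const)
    have h1 : AEStronglyMeasurable (fun x => (u x + β i - g (x, y i)) / ζ) μ := by
      simp only [div_eq_mul_inv]
      exact ((hu.add aestronglyMeasurable_const).sub hgc.aestronglyMeasurable).mul
        aestronglyMeasurable_const
    exact (Real.continuous_exp.comp_aestronglyMeasurable h1).const_mul _
  have hFmeas : AEStronglyMeasurable F μ := measG _ (Lp.aestronglyMeasurable α)
  -- ae bound for F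
  have hFae : ∀ᵐ x ∂μ, 0 ≤ F x ∧ F x ≤ C := by
    filter_upwards [stmt8_ae_le α] with x hx
    constructor
    · exact Finset.sum_nonneg fun i _ => mul_nonneg (hwle i) (exp_pos _).le
    · exact stmt8_sum_le w β (fun i => g (x, y i)) hwle hw1 hζ _ _ _ _ hx hβb
        (fun i => hMg _)
  -- integrability of Lp top functions
  have intLp : ∀ u : Lp ℝ ⊤ μ, Integrable (u : X → ℝ) μ := fun u =>
    (Lp.memLp u).integrable le_top
  have intF : Integrable F μ := by
    refine (integrable_const C).mono' hFmeas ?_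
    filter_upwards [hFae] with x hx
    rw [Real.norm_eq_abs, abs_of_nonneg hx.1]; exact hx.2
  have intFmul : ∀ h : Lp ℝ ⊤ μ, Integrable (fun x => F x * h x) μ := by
    intro h
    refine (integrable_const (C * ‖h‖)).mono' (hFmeas.mul (Lp.aestronglyMeasurable h)) ?_
    filter_upwards [hFae, stmt8_ae_le h] with x hx hhx
    rw [Real.norm_eq_abs, abs_mul, abs_of_nonneg hx.1]
    exact mul_le_mul hx.2 hhx (abs_nonneg _) hC0.le
  have intD : ∀ h : Lp ℝ ⊤ μ, Integrable (fun x => (1 - F x) * h x) μ := by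
    intro h
    have : (fun x => (1 - F x) * h x) = fun x => h x - F x * h x := by
      funext x; ring
    rw [this]
    exact (intLp h).sub (intFmul h)
  -- the candidate derivative
  have Dsplit : ∀ h : Lp ℝ ⊤ μ,
      ∫ x, (1 - F x) * h x ∂μ = ∫ x, h x ∂μ - ∫ x, F x * h x ∂μ := by
    intro h
    rw [← integral_sub (intLp h) (intFmul h)]
    congr 1; funext x; ring
  set T : Lp ℝ ⊤ μ →ₗ[ℝ] ℝ :=
    { toFun := fun h => ∫ x, (1 - F x) * h x ∂μ
      map_add' := by
        intro h h'
        have : ∫ x, (1 - F x) * (h + h') x ∂μ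
            = ∫ x, ((1 - F x) * h x + (1 - F x) * h' x) ∂μ := by
          refine integral_congr_ae ?_
          filter_upwards [Lp.coeFn_add h h'] with x hx
          rw [hx]; simp [mul_add]
        rw [this, integral_add (intD h) (intD h')]
      map_smul' := by
        intro c h
        simp only [RingHom.id_apply, smul_eq_mul]
        have : ∫ x, (1 - F x) * (c • h) x ∂μ = ∫ x, c * ((1 - F x) * h x) ∂μ := by
          refine integral_congr_ae ?_
          filter_upwards [Lp.coeFn_smul c h] with x hx
          rw [hx]; simp [smul_eq_mul]; ring
        rw [this, integral_const_mul] } with hTdef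
  have Tbound : ∀ h : Lp ℝ ⊤ μ, ‖T h‖ ≤ (1 + C) * ‖h‖ := by
    intro h
    have hb : ∀ᵐ x ∂μ, ‖(1 - F x) * h x‖ ≤ (1 + C) * ‖h‖ := by
      filter_upwards [hFae, stmt8_ae_le h] with x hx hhx
      rw [Real.norm_eq_abs, abs_mul]
      refine mul_le_mul ?_ hhx (abs_nonneg _) (by positivity)
      calc |1 - F x| ≤ |1| + |F x| := abs_sub _ _
        _ ≤ 1 + C := by
            rw [abs_one, abs_of_nonneg hx.1]
            linarith [hx.2]
    have := norm_integral_le_of_norm_le (integrable_const ((1 + C) * ‖h‖)) hb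
    change ‖∫ x, (1 - F x) * h x ∂μ‖ ≤ (1 + C) * ‖h‖
    simpa [integral_const] using this
  refine ⟨T.mkContinuous ((1 + C)) Tbound, ?_, fun h => rfl⟩
  -- main estimate
  rw [hasFDerivAt_iff_isLittleO_nhds_zero]
  rw [Asymptotics.isLittleO_iff]
  intro ε hε
  rw [Metric.eventually_nhds_iff]
  refine ⟨min ζ (ε * ζ / C), by positivity, ?_⟩
  intro h hdist
  rw [dist_zero_right] at hdist
  have hhζ : ‖h‖ ≤ ζ := le_of_lt (lt_of_lt_of_le hdist (min_le_left _ _))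
  have hhε : ‖h‖ ≤ ε * ζ / C := le_of_lt (lt_of_lt_of_le hdist (min_le_right _ _))
  set G2 : X → ℝ := fun x => ∑ i, w i * exp (((α + h) x + β i - g (x, y i)) / ζ) with hG2def
  have hG2meas : AEStronglyMeasurable G2 μ := measG _ (Lp.aestronglyMeasurable (α + h))
  have intG2 : Integrable G2 μ := by
    refine (integrable_const (exp ((‖α + h‖ + Mβ + Mg) / ζ))).mono' hG2meas ?_
    filter_upwards [stmt8_ae_le (α + h)] with x hx
    have h0 : 0 ≤ G2 x := Finset.sum_nonneg fun i _ => mul_nonneg (hwle i) (exp_pos _).le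
    rw [Real.norm_eq_abs, abs_of_nonneg h0]
    exact stmt8_sum_le w β (fun i => g (x, y i)) hwle hw1 hζ _ _ _ _ hx hβb fun i => hMg _
  have intFh : Integrable (fun x => F x * h x / ζ) μ := (intFmul h).div_const ζ
  -- compute E h
  have hE : L (α + h) - L α - T h
      = -(ζ * ∫ x, (G2 x - F x - F x * h x / ζ) ∂μ) := by
    have e1 : ∫ x, (α + h) x ∂μ = ∫ x, α x ∂μ + ∫ x, h x ∂μ := by
      rw [← integral_add (intLp α) (intLp h)]
      refine integral_congr_ae ?_
      filter_upwards [Lp.coeFn_add α h] with x hx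
      rw [hx]; simp
    have e2 : ∫ x, (G2 x - F x - F x * h x / ζ) ∂μ
        = ∫ x, G2 x ∂μ - ∫ x, F x ∂μ - (∫ x, F x * h x ∂μ) / ζ := by
      have i1 : Integrable (fun x => G2 x - F x) μ := intG2.sub intF
      rw [integral_sub i1 intFh, integral_sub intG2 intF, integral_div]
    have e3 : T h = ∫ x, h x ∂μ - ∫ x, F x * h x ∂μ := Dsplit h
    have e5 : ∫ x, ∑ i, w i * exp (((α + h) x + β i - g (x, y i)) / ζ) ∂μ
        = ∫ x, G2 x ∂μ := rfl
    rw [hL (α + h), hL α, e1, e2, e3, e5]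
    have hz : ζ * ((∫ x, F x * h x ∂μ) / ζ) = ∫ x, F x * h x ∂μ :=
      mul_div_cancel₀ _ hζ.ne'
    linear_combination -hz
  have hDapp : (T.mkContinuous (1 + C) Tbound) h = T h := rfl
  rw [hDapp, hE]
  -- ae bound on the integrand
  have hΔ : ∀ᵐ x ∂μ, ‖G2 x - F x - F x * h x / ζ‖ ≤ C / ζ ^ 2 * ‖h‖ ^ 2 := by
    filter_upwards [stmt8_ae_le α, stmt8_ae_le h, Lp.coeFn_add α h] with x hα hh hadd
    have hfC : ∀ i, exp ((α x + β i - g (x, y i)) / ζ) ≤ C := by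
      intro i
      refine exp_le_exp.2 (div_le_div_of_nonneg_right ?_ hζ.le)
      have h1 := abs_le.1 hα
      have h2 := abs_le.1 (hβb i)
      have h3 := abs_le.1 (hMg (x, y i))
      linarith [h1.2, h2.2, h3.1]
    have hGx : G2 x = ∑ i, w i * exp ((α x + h x + β i - g (x, y i)) / ζ) := by
      simp only [hG2def, hadd]
      rfl
    rw [Real.norm_eq_abs, hGx, mul_div_assoc, ← mul_div_assoc]
    exact stmt8_delta_bound w β (fun i => g (x, y i)) hwle hw1 hζ (α x) (h x) C ‖h‖
      hfC (hh.trans hhζ) hh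
  have hbound := norm_integral_le_of_norm_le (integrable_const (C / ζ ^ 2 * ‖h‖ ^ 2)) hΔ
  rw [integral_const, probReal_univ] at hbound
  simp only [ENNReal.toReal_one, one_smul] at hbound
  calc ‖-(ζ * ∫ x, (G2 x - F x - F x * h x / ζ) ∂μ)‖
      = ζ * ‖∫ x, (G2 x - F x - F x * h x / ζ) ∂μ‖ := by
        rw [norm_neg, norm_mul, Real.norm_eq_abs ζ, abs_of_pos hζ]
    _ ≤ ζ * (C / ζ ^ 2 * ‖h‖ ^ 2) := by
        exact mul_le_mul_of_nonneg_left hbound hζ.le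
    _ = (C / ζ * ‖h‖) * ‖h‖ := by field_simp
    _ ≤ ε * ‖h‖ := by
        refine mul_le_mul_of_nonneg_right ?_ (norm_nonneg h)
        calc C / ζ * ‖h‖ ≤ C / ζ * (ε * ζ / C) :=
              mul_le_mul_of_nonneg_left hhε (by positivity)
          _ = ε := by field_simp
end
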